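/- Let λ < 0, set ω = √(−λ), let N ≥ 2, and let c₁, c₂, c₃ ∈ ℝᴺ with ‖c₁‖ = ‖c₂‖ = 1 and ⟨c₁, c₂⟩ = 0. Define γ : ℝ → ℝᴺ by γ(s) = (1/ω)·(cos(ωs)·c₁ + sin(ωs)·c₂) + c₃. Then: (i) ‖γ'(s)‖ = 1 for all s (γ is parametrized by arc length); (ii) γ⁗(s) = λ·γ''(s) for all s, so in particular γ is λ-biminimal (the component of −γ⁗ + λγ'' orthogonal to γ' vanishes); and (iii) γ''(s) ≠ 0 for all s, so γ is non-minimal (non-trivial). -/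

import Mathlib

open scoped InnerProductSpace

/-- Example 4.7: for `λ < 0`, `ω = √(−λ)`, and orthonormal constant vectors
`c₁, c₂ ∈ ℝᴺ`, the circle `γ(s) = (1/ω)(cos(ωs)c₁ + sin(ωs)c₂) + c₃` is a
unit-speed, non-trivial `λ`-biminimal curve: `‖γ'‖ = 1`, `γ⁗ = λγ''` (hence
the normal component of `−γ⁗ + λγ''` vanishes), and `γ'' ≠ 0` everywhere. -/
theorem circle_is_nontrivial_biminimal
    (lam : ℝ) (hlam : lam < 0) (ω : ℝ) (hω : ω = Real.sqrt (-lam))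
    {N : ℕ} (hN : 2 ≤ N) (c₁ c₂ c₃ : EuclideanSpace ℝ (Fin N))
    (hc₁ : ‖c₁‖ = 1) (hc₂ : ‖c₂‖ = 1) (hc₁c₂ : ⟪c₁, c₂⟫_ℝ = 0)
    (γ : ℝ → EuclideanSpace ℝ (Fin N))
    (hγ : ∀ s, γ s = (1 / ω) • (Real.cos (ω * s) • c₁
      + Real.sin (ω * s) • c₂) + c₃) :
    (∀ s, ‖deriv γ s‖ = 1) ∧
    (∀ s, iteratedDeriv 4 γ s = lam • iteratedDeriv 2 γ s) ∧
    (∀ s, ∀ v : EuclideanSpace ℝ (Fin N), ⟪v, deriv γ s⟫_ℝ = 0 →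
      ⟪-(iteratedDeriv 4 γ s) + lam • iteratedDeriv 2 γ s, v⟫_ℝ = 0) ∧
    (∀ s, iteratedDeriv 2 γ s ≠ 0) := by
  have hω0 : 0 < ω := by
    rw [hω]; exact Real.sqrt_pos.2 (by linarith)
  have hωne : ω ≠ 0 := ne_of_gt hω0
  have hω2 : ω ^ 2 = -lam := by
    rw [hω, Real.sq_sqrt (by linarith)]
  have hγeq : γ = fun s => (1 / ω) • (Real.cos (ω * s) • c₁
      + Real.sin (ω * s) • c₂) + c₃ := funext hγ
  subst hγeq
  -- scalar derivative facts
  have hcos : ∀ s, HasDerivAt (fun t => Real.cos (ω * t)) (-(ω * Real.sin (ω * s))) s := by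
    intro s
    exact ((Real.hasDerivAt_cos (ω * s)).comp s ((hasDerivAt_id s).const_mul ω)).congr_deriv (by ring)
  have hsin : ∀ s, HasDerivAt (fun t => Real.sin (ω * t)) (ω * Real.cos (ω * s)) s := by
    intro s
    exact ((Real.hasDerivAt_sin (ω * s)).comp s ((hasDerivAt_id s).const_mul ω)).congr_deriv (by ring)
  set g1 : ℝ → EuclideanSpace ℝ (Fin N) :=
    fun s => (-Real.sin (ω * s)) • c₁ + Real.cos (ω * s) • c₂ with hg1
  set g2 : ℝ → EuclideanSpace ℝ (Fin N) :=
    fun s => (-(ω * Real.cos (ω * s))) • c₁ + (-(ω * Real.sin (ω * s))) • c₂ with hg2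
  set g3 : ℝ → EuclideanSpace ℝ (Fin N) :=
    fun s => (ω ^ 2 * Real.sin (ω * s)) • c₁ + (-(ω ^ 2 * Real.cos (ω * s))) • c₂ with hg3
  set g4 : ℝ → EuclideanSpace ℝ (Fin N) :=
    fun s => (ω ^ 3 * Real.cos (ω * s)) • c₁ + (ω ^ 3 * Real.sin (ω * s)) • c₂ with hg4
  have h1 : ∀ s, HasDerivAt
      (fun s => (1 / ω) • (Real.cos (ω * s) • c₁ + Real.sin (ω * s) • c₂) + c₃) (g1 s) s := by
    intro s
    have := (((hcos s).smul_const c₁).add ((hsin s).smul_const c₂)).const_smul (1 / ω)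
    have h := this.add_const c₃
    convert h using 1
    · rfl
    · rfl
    · rfl
    · rfl
    rw [hg1]
    have e1 : (1 / ω) * -(ω * Real.sin (ω * s)) = -Real.sin (ω * s) := by field_simp
    have e2 : (1 / ω) * (ω * Real.cos (ω * s)) = Real.cos (ω * s) := by field_simp
    rw [smul_add, smul_smul, smul_smul, e1, e2]
  have h2 : ∀ s, HasDerivAt g1 (g2 s) s := by
    intro s
    have := (((hsin s).neg).smul_const c₁).add ((hcos s).smul_const c₂)
    convert this using 1
    · rfl
    · rfl
    · rfl
    · rfl
  have h3 : ∀ s, HasDerivAt g2 (g3 s) s := by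
    intro s
    have := ((((hcos s).const_mul ω).neg).smul_const c₁).add
      ((((hsin s).const_mul ω).neg).smul_const c₂)
    convert this using 1
    · rfl
    · rfl
    · rfl
    · rfl
    rw [hg3]
    ring_nf
  have h4 : ∀ s, HasDerivAt g3 (g4 s) s := by
    intro s
    have := ((((hsin s).const_mul (ω ^ 2))).smul_const c₁).add
      ((((hcos s).const_mul (ω ^ 2)).neg).smul_const c₂)
    convert this using 1
    · rfl
    · rfl
    · rfl
    · rfl
    rw [hg4]
    ring_nf
  have hd1 : deriv (fun s => (1 / ω) • (Real.cos (ω * s) • c₁ + Real.sin (ω * s) • c₂) + c₃)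
      = g1 := funext fun s => (h1 s).deriv
  have hd2 : iteratedDeriv 2
      (fun s => (1 / ω) • (Real.cos (ω * s) • c₁ + Real.sin (ω * s) • c₂) + c₃) = g2 := by
    rw [iteratedDeriv_succ, iteratedDeriv_one, hd1]
    exact funext fun s => (h2 s).deriv
  have hd3 : iteratedDeriv 3
      (fun s => (1 / ω) • (Real.cos (ω * s) • c₁ + Real.sin (ω * s) • c₂) + c₃) = g3 := by
    rw [iteratedDeriv_succ, hd2]
    exact funext fun s => (h3 s).deriv
  have hd4 : iteratedDeriv 4
      (fun s => (1 / ω) • (Real.cos (ω * s) • c₁ + Real.sin (ω * s) • c₂) + c₃) = g4 := by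
    rw [iteratedDeriv_succ, hd3]
    exact funext fun s => (h4 s).deriv
  have hnorm : ∀ (a b : ℝ), ‖a • c₁ + b • c₂‖ ^ 2 = a ^ 2 + b ^ 2 := by
    intro a b
    have h := norm_add_sq_real (a • c₁) (b • c₂)
    rw [norm_smul, norm_smul, real_inner_smul_left, real_inner_smul_right, hc₁c₂] at h
    rw [h, hc₁, hc₂]
    simp [mul_pow, sq_abs]
  have key : ∀ s, g4 s = lam • g2 s := by
    intro s
    rw [hg4, hg2]
    simp only [smul_add, smul_smul]
    have hl : lam = -ω ^ 2 := by linarith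
    have e1 : ω ^ 3 * Real.cos (ω * s) = lam * -(ω * Real.cos (ω * s)) := by
      rw [hl]; ring
    have e2 : ω ^ 3 * Real.sin (ω * s) = lam * -(ω * Real.sin (ω * s)) := by
      rw [hl]; ring
    rw [e1, e2]
  refine ⟨?_, ?_, ?_, ?_⟩
  · intro s
    rw [hd1]
    have h := hnorm (-Real.sin (ω * s)) (Real.cos (ω * s))
    have : ‖g1 s‖ ^ 2 = 1 := by
      rw [hg1]; rw [h]; ring_nf; rw [add_comm]; exact Real.cos_sq_add_sin_sq (ω * s)
    nlinarith [norm_nonneg (g1 s)]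
  · intro s
    rw [hd4, hd2, key]
  · intro s v _
    rw [hd4, hd2, key]
    simp
  · intro s
    rw [hd2]
    intro h
    have h2n : ‖g2 s‖ ^ 2 = ω ^ 2 := by
      simp only [hg2]
      rw [hnorm]
      have t := Real.sin_sq_add_cos_sq (ω * s)
      linear_combination ω ^ 2 * t
    rw [h, norm_zero, zero_pow (by norm_num)] at h2n
    exact pow_ne_zero 2 hωne h2n.symm
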